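/- Let G_1 and G_2 be finite connected simple graphs such that, for i = 1,2, G_i is uniquely k_i-dimensional of order n_i and has a vertex of degree n_i − 1. Then there exists a finite connected simple graph G of order n_1 + n_2 − 1 that is uniquely (k_1 + k_2)-dimensional and has a vertex of degree n_1 + n_2 − 2. -/

import Mathlib

open SimpleGraph

def IsResolvingSet {V : Type*} (G : SimpleGraph V) (W : Finset V) : Prop :=
  ∀ u v : V, u ≠ v → ∃ w ∈ W, G.dist u w ≠ G.dist v w

noncomputable def metricDim {V : Type*} (G : SimpleGraph V) : ℕ :=
  sInf {k | ∃ W : Finset V, IsResolvingSet G W ∧ W.card = k}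

def IsMetricBasis {V : Type*} (G : SimpleGraph V) (B : Finset V) : Prop :=
  IsResolvingSet G B ∧ B.card = metricDim G

def UniquelyDimensional {V : Type*} (G : SimpleGraph V) : Prop :=
  ∃! B : Finset V, IsMetricBasis G B

def UniquelyKDimensional {V : Type*} (G : SimpleGraph V) (k : ℕ) : Prop :=
  UniquelyDimensional G ∧ metricDim G = k

section basics

open scoped Classical

variable {V : Type*}

/-- `v` is a dominant vertex. -/
def Dom (G : SimpleGraph V) (v : V) : Prop := ∀ u, u ≠ v → G.Adj v u

lemma Dom.connected {G : SimpleGraph V} {v : V} (hv : Dom G v) : G.Connected := by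
  haveI : Nonempty V := ⟨v⟩
  refine ⟨fun a b => ?_⟩
  have h1 : G.Reachable a v := by
    by_cases h : a = v
    · rw [h]
    · exact ((hv a h).reachable).symm
  have h2 : G.Reachable v b := by
    by_cases h : b = v
    · rw [h]
    · exact (hv b h).reachable
  exact h1.trans h2

lemma Dom.dist_eq {G : SimpleGraph V} {v : V} (hv : Dom G v) (x y : V) :
    G.dist x y = if x = y then 0 else if G.Adj x y then 1 else 2 := by
  have hconn : G.Connected := hv.connected
  split_ifs with h1 h2
  · subst h1; exact SimpleGraph.dist_self
  · exact SimpleGraph.dist_eq_one_iff_adj.mpr h2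
  · have hxv : x ≠ v := by rintro rfl; exact h2 (hv y (Ne.symm h1))
    have hyv : y ≠ v := by rintro rfl; exact h2 (hv x hxv).symm
    have hle : G.dist x y ≤ 2 := by
      have := SimpleGraph.dist_le (Walk.cons (hv x hxv).symm (Walk.cons (hv y hyv) Walk.nil))
      simpa using this
    have h0 : G.dist x y ≠ 0 := by
      simp only [ne_eq, hconn.dist_eq_zero_iff]; exact h1
    have hone : G.dist x y ≠ 1 := fun h => h2 (SimpleGraph.dist_eq_one_iff_adj.mp h)
    omega

lemma Dom.dist_dom {G : SimpleGraph V} {v : V} (hv : Dom G v) {u : V} (h : u ≠ v) :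
    G.dist u v = 1 := by
  rw [hv.dist_eq]
  simp [h, (hv u h).symm]

lemma Dom.dist_dom' {G : SimpleGraph V} {v : V} (hv : Dom G v) {u : V} (h : u ≠ v) :
    G.dist v u = 1 := by
  rw [SimpleGraph.dist_comm]; exact hv.dist_dom h

variable [Fintype V]

lemma isResolvingSet_univ {G : SimpleGraph V} {v : V} (hv : Dom G v) :
    IsResolvingSet G Finset.univ := by
  intro a b hab
  refine ⟨a, Finset.mem_univ a, ?_⟩
  have hba : G.dist b a ≠ 0 := by
    simp only [ne_eq, hv.connected.dist_eq_zero_iff]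
    exact fun h => hab h.symm
  rw [SimpleGraph.dist_self]
  exact fun h => hba h.symm

lemma metricDim_le_card {G : SimpleGraph V} {W : Finset V} (hW : IsResolvingSet G W) :
    metricDim G ≤ W.card :=
  Nat.sInf_le ⟨W, hW, rfl⟩

lemma exists_metricBasis {G : SimpleGraph V} {v : V} (hv : Dom G v) :
    ∃ B : Finset V, IsMetricBasis G B := by
  have hne : {k | ∃ W : Finset V, IsResolvingSet G W ∧ W.card = k}.Nonempty :=
    ⟨Finset.univ.card, Finset.univ, isResolvingSet_univ hv, rfl⟩
  obtain ⟨W, hW, hcard⟩ := Nat.sInf_mem hne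
  exact ⟨W, hW, hcard⟩

end basics
lemma dom_not_mem_basis {V : Type*} [Fintype V] {G : SimpleGraph V} {v : V} (hv : Dom G v)
    (huniq : UniquelyDimensional G) {B : Finset V} (hB : IsMetricBasis G B) : v ∉ B := by
  classical
  intro hvB
  set E := B.erase v with hEdef
  have hcardE : E.card = B.card - 1 := Finset.card_erase_of_mem hvB
  have hk : 1 ≤ B.card := Finset.card_pos.mpr ⟨v, hvB⟩
  have hEnr : ¬ IsResolvingSet G E := by
    intro h
    have h1 := metricDim_le_card h
    have h2 := hB.2
    omega
  rw [IsResolvingSet] at hEnr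
  push_neg at hEnr
  obtain ⟨x, y, hxy, hall⟩ := hEnr
  obtain ⟨w, hwB, hwne⟩ := hB.1 x y hxy
  have hwv : w = v := by
    by_contra hne
    exact hwne (hall w (Finset.mem_erase.mpr ⟨hne, hwB⟩))
  rw [hwv] at hwne
  have hdist1 : ∀ z, z ≠ v → G.dist z v = 1 := fun z hz => hv.dist_dom hz
  obtain ⟨p, hpv, hpall⟩ : ∃ p, p ≠ v ∧ ∀ w ∈ E, G.dist p w = 1 := by
    rcases eq_or_ne x v with hxv | hxv
    · refine ⟨y, fun h => hxy (hxv.trans h.symm), fun w hw => ?_⟩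
      have hwv' : w ≠ v := (Finset.mem_erase.mp hw).1
      rw [← hall w hw, hxv]
      exact hv.dist_dom' hwv'
    · rcases eq_or_ne y v with hyv | hyv
      · refine ⟨x, hxv, fun w hw => ?_⟩
        have hwv' : w ≠ v := (Finset.mem_erase.mp hw).1
        rw [hall w hw, hyv]
        exact hv.dist_dom' hwv'
      · exact absurd (by rw [hdist1 x hxv, hdist1 y hyv]) hwne
  have hpE : p ∉ E := by
    intro h
    have h0 := hpall p h
    rw [SimpleGraph.dist_self] at h0
    omega
  have hpB : p ∉ B := fun h => hpE (Finset.mem_erase.mpr ⟨hpv, h⟩)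
  set B' := insert p E with hB'def
  have hcardB' : B'.card = B.card := by
    rw [Finset.card_insert_of_notMem hpE, hcardE]
    omega
  have hBneq : B' ≠ B := fun h => hpB (h ▸ Finset.mem_insert_self p E)
  have key : ∀ b, b ≠ v → (∀ w ∈ E, G.dist b w = 1) → b = p := by
    intro b hbv hb1
    by_contra hbp
    obtain ⟨w', hw', hne'⟩ := hB.1 b p hbp
    rcases eq_or_ne w' v with rfl | hw'v
    · exact hne' (by rw [hdist1 b hbv, hdist1 p hpv])
    · have hw'E : w' ∈ E := Finset.mem_erase.mpr ⟨hw'v, hw'⟩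
      exact hne' (by rw [hb1 w' hw'E, hpall w' hw'E])
  have hres : IsResolvingSet G B' := by
    intro a b hab
    by_cases hEx : ∃ w ∈ E, G.dist a w ≠ G.dist b w
    · obtain ⟨w, hw, hne⟩ := hEx
      exact ⟨w, Finset.mem_insert_of_mem hw, hne⟩
    · push_neg at hEx
      obtain ⟨w, hwB, hwne⟩ := hB.1 a b hab
      have hwv : w = v := by
        by_contra h
        exact hwne (hEx w (Finset.mem_erase.mpr ⟨h, hwB⟩))
      rw [hwv] at hwne
      rcases eq_or_ne a v with hav | hav
      · have hbv : b ≠ v := fun h => hab (hav.trans h.symm)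
        have hb1 : ∀ w ∈ E, G.dist b w = 1 := by
          intro w hw
          rw [← hEx w hw, hav]
          exact hv.dist_dom' (Finset.mem_erase.mp hw).1
        have hbp : b = p := key b hbv hb1
        refine ⟨p, Finset.mem_insert_self _ _, ?_⟩
        rw [hav, hbp, SimpleGraph.dist_self, hv.dist_dom' hpv]
        omega
      · have hbv : b = v := by
          by_contra hbv
          exact hwne (by rw [hdist1 a hav, hdist1 b hbv])
        have ha1 : ∀ w ∈ E, G.dist a w = 1 := by
          intro w hw
          rw [hEx w hw, hbv]
          exact hv.dist_dom' (Finset.mem_erase.mp hw).1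
        have hap : a = p := key a hav ha1
        refine ⟨p, Finset.mem_insert_self _ _, ?_⟩
        rw [hap, hbv, SimpleGraph.dist_self, hv.dist_dom' hpv]
        omega
  obtain ⟨Bu, _, hun⟩ := huniq
  have e1 : B' = Bu := hun B' ⟨hres, by rw [hcardB']; exact hB.2⟩
  have e2 : B = Bu := hun B hB
  exact hBneq (e1.trans e2.symm)

lemma dom_mem_resolving_card {V : Type*} [Fintype V] {G : SimpleGraph V} {v : V}
    (hv : Dom G v) (huniq : UniquelyDimensional G) {W : Finset V}
    (hW : IsResolvingSet G W) (hvW : v ∈ W) : metricDim G + 1 ≤ W.card := by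
  have h1 : metricDim G ≤ W.card := metricDim_le_card hW
  rcases eq_or_lt_of_le h1 with heq | hlt
  · exfalso
    obtain ⟨Bu, hBu, hun⟩ := huniq
    have : W = Bu := hun W ⟨hW, heq.symm⟩
    exact dom_not_mem_basis hv ⟨Bu, hBu, hun⟩ hBu (this ▸ hvW)
  · omega
section construction

open scoped Classical

variable {V₁ V₂ : Type*}

def JoinGraph (G₁ : SimpleGraph V₁) (G₂ : SimpleGraph V₂) (v₂ : V₂) :
    SimpleGraph (V₁ ⊕ {y : V₂ // y ≠ v₂}) where
  Adj x y :=
    match x, y with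
    | Sum.inl a, Sum.inl b => G₁.Adj a b
    | Sum.inr a, Sum.inr b => G₂.Adj a.1 b.1
    | Sum.inl _, Sum.inr _ => True
    | Sum.inr _, Sum.inl _ => True
  symm := by
    constructor
    rintro (a | a) (b | b) h
    · exact G₁.adj_symm h
    · trivial
    · trivial
    · exact G₂.adj_symm h
  loopless := by
    constructor
    rintro (a | a) h
    · exact G₁.irrefl h
    · exact G₂.irrefl h

variable {G₁ : SimpleGraph V₁} {G₂ : SimpleGraph V₂} {v₁ : V₁} {v₂ : V₂}

@[simp] lemma joinGraph_adj_inl_inl {a b : V₁} :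
    (JoinGraph G₁ G₂ v₂).Adj (Sum.inl a) (Sum.inl b) ↔ G₁.Adj a b := Iff.rfl

@[simp] lemma joinGraph_adj_inr_inr {a b : {y : V₂ // y ≠ v₂}} :
    (JoinGraph G₁ G₂ v₂).Adj (Sum.inr a) (Sum.inr b) ↔ G₂.Adj a.1 b.1 := Iff.rfl

@[simp] lemma joinGraph_adj_inl_inr {a : V₁} {b : {y : V₂ // y ≠ v₂}} :
    (JoinGraph G₁ G₂ v₂).Adj (Sum.inl a) (Sum.inr b) := trivial

@[simp] lemma joinGraph_adj_inr_inl {a : {y : V₂ // y ≠ v₂}} {b : V₁} :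
    (JoinGraph G₁ G₂ v₂).Adj (Sum.inr a) (Sum.inl b) := trivial

lemma joinGraph_dom (hdom₁ : Dom G₁ v₁) :
    Dom (JoinGraph G₁ G₂ v₂) (Sum.inl v₁) := by
  rintro (b | b) hb
  · exact hdom₁ b (fun h => hb (by rw [h]))
  · simp

lemma joinGraph_dist_inl_inl (hdom₁ : Dom G₁ v₁) (a b : V₁) :
    (JoinGraph G₁ G₂ v₂).dist (Sum.inl a) (Sum.inl b) = G₁.dist a b := by
  rw [(joinGraph_dom hdom₁ (G₂ := G₂) (v₂ := v₂)).dist_eq, hdom₁.dist_eq]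
  simp only [Sum.inl.injEq, joinGraph_adj_inl_inl]

lemma joinGraph_dist_inr_inr (hdom₁ : Dom G₁ v₁) (hdom₂ : Dom G₂ v₂)
    (a b : {y : V₂ // y ≠ v₂}) :
    (JoinGraph G₁ G₂ v₂).dist (Sum.inr a) (Sum.inr b) = G₂.dist a.1 b.1 := by
  rw [(joinGraph_dom hdom₁ (G₂ := G₂) (v₂ := v₂)).dist_eq, hdom₂.dist_eq]
  simp only [Sum.inr.injEq, joinGraph_adj_inr_inr, Subtype.ext_iff]

lemma joinGraph_dist_inl_inr (hdom₁ : Dom G₁ v₁) (a : V₁) (b : {y : V₂ // y ≠ v₂}) :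
    (JoinGraph G₁ G₂ v₂).dist (Sum.inl a) (Sum.inr b) = 1 := by
  rw [(joinGraph_dom hdom₁ (G₂ := G₂) (v₂ := v₂)).dist_eq]
  simp

lemma joinGraph_dist_inr_inl (hdom₁ : Dom G₁ v₁) (a : {y : V₂ // y ≠ v₂}) (b : V₁) :
    (JoinGraph G₁ G₂ v₂).dist (Sum.inr a) (Sum.inl b) = 1 := by
  rw [SimpleGraph.dist_comm]
  exact joinGraph_dist_inl_inr hdom₁ b a

end construction
section main

open scoped Classical

variable {V₁ V₂ : Type*} [Fintype V₁] [Fintype V₂]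

theorem joinGraph_main {G₁ : SimpleGraph V₁} {G₂ : SimpleGraph V₂} {v₁ : V₁} {v₂ : V₂}
    (hdom₁ : Dom G₁ v₁) (hdom₂ : Dom G₂ v₂)
    (hu₁ : UniquelyDimensional G₁) (hu₂ : UniquelyDimensional G₂) :
    UniquelyDimensional (JoinGraph G₁ G₂ v₂) ∧
      metricDim (JoinGraph G₁ G₂ v₂) = metricDim G₁ + metricDim G₂ := by
  obtain ⟨B₁, hB₁, hun₁⟩ := hu₁
  obtain ⟨B₂, hB₂, hun₂⟩ := hu₂
  have hu₁' : UniquelyDimensional G₁ := ⟨B₁, hB₁, hun₁⟩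
  have hu₂' : UniquelyDimensional G₂ := ⟨B₂, hB₂, hun₂⟩
  have hv₁B : v₁ ∉ B₁ := dom_not_mem_basis hdom₁ hu₁' hB₁
  have hv₂B : v₂ ∉ B₂ := dom_not_mem_basis hdom₂ hu₂' hB₂
  set k₁ := metricDim G₁ with hk₁
  set k₂ := metricDim G₂ with hk₂
  set H := JoinGraph G₁ G₂ v₂ with hHdef
  have hH : Dom H (Sum.inl v₁) := joinGraph_dom hdom₁
  -- the candidate basis
  set emb1 : V₁ ↪ V₁ ⊕ {y : V₂ // y ≠ v₂} := ⟨Sum.inl, Sum.inl_injective⟩ with hemb1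
  set emb2 : {y : V₂ // y ≠ v₂} ↪ V₁ ⊕ {y : V₂ // y ≠ v₂} :=
    ⟨Sum.inr, Sum.inr_injective⟩ with hemb2
  set B₂s : Finset {y : V₂ // y ≠ v₂} := B₂.subtype (fun y => y ≠ v₂) with hB₂s
  set BH : Finset (V₁ ⊕ {y : V₂ // y ≠ v₂}) := B₁.map emb1 ∪ B₂s.map emb2 with hBH
  have hmem_inl : ∀ a : V₁, Sum.inl a ∈ BH ↔ a ∈ B₁ := by
    intro a
    simp [hBH, hemb1, hemb2, Finset.mem_union, Finset.mem_map]
  have hmem_inr : ∀ c : {y : V₂ // y ≠ v₂}, Sum.inr c ∈ BH ↔ c.1 ∈ B₂ := by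
    intro c
    simp [hBH, hemb1, hemb2, hB₂s, Finset.mem_union, Finset.mem_map, Finset.mem_subtype]
  have hB₂s_card : B₂s.card = B₂.card := by
    rw [hB₂s, Finset.card_subtype, Finset.filter_true_of_mem]
    intro x hx
    exact fun h => hv₂B (h ▸ hx)
  have hBHcard : BH.card = k₁ + k₂ := by
    rw [hBH, Finset.card_union_of_disjoint, Finset.card_map, Finset.card_map, hB₂s_card,
      hB₁.2, hB₂.2]
    · rw [Finset.disjoint_left]
      rintro x hx hx'
      rw [Finset.mem_map] at hx hx'
      obtain ⟨a, _, ha⟩ := hx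
      obtain ⟨b, _, hb⟩ := hx'
      rw [← ha] at hb
      simp [hemb1, hemb2] at hb
  -- dist to the dominant vertices
  have hd2 : ∀ {u : V₂}, u ≠ v₂ → G₂.dist v₂ u = 1 := fun h => hdom₂.dist_dom' h
  have hd1 : ∀ {u : V₁}, u ≠ v₁ → G₁.dist v₁ u = 1 := fun h => hdom₁.dist_dom' h
  -- BH is resolving
  have cross : ∀ (a : V₁) (b : {y : V₂ // y ≠ v₂}),
      ∃ w ∈ BH, H.dist (Sum.inl a) w ≠ H.dist (Sum.inr b) w := by
    intro a b
    rcases eq_or_ne a v₁ with hav | hav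
    · obtain ⟨w, hw, hne⟩ := hB₂.1 b.1 v₂ b.2
      have hwv : w ≠ v₂ := fun h => hv₂B (h ▸ hw)
      rw [hd2 hwv] at hne
      refine ⟨Sum.inr ⟨w, hwv⟩, (hmem_inr _).mpr hw, ?_⟩
      rw [joinGraph_dist_inl_inr hdom₁, joinGraph_dist_inr_inr hdom₁ hdom₂]
      exact fun h => hne (by rw [← h])
    · obtain ⟨w, hw, hne⟩ := hB₁.1 a v₁ hav
      have hwv : w ≠ v₁ := fun h => hv₁B (h ▸ hw)
      rw [hd1 hwv] at hne
      refine ⟨Sum.inl w, (hmem_inl _).mpr hw, ?_⟩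
      rw [joinGraph_dist_inl_inl hdom₁, joinGraph_dist_inr_inl hdom₁]
      exact hne
  have hBHres : IsResolvingSet H BH := by
    rintro (a | a) (b | b) hxy
    · have hab : a ≠ b := fun h => hxy (by rw [h])
      obtain ⟨w, hw, hne⟩ := hB₁.1 a b hab
      refine ⟨Sum.inl w, (hmem_inl _).mpr hw, ?_⟩
      rw [joinGraph_dist_inl_inl hdom₁, joinGraph_dist_inl_inl hdom₁]
      exact hne
    · exact cross a b
    · obtain ⟨w, hw, hne⟩ := cross b a
      exact ⟨w, hw, fun h => hne h.symm⟩
    · have hab : a.1 ≠ b.1 := fun h => hxy (by rw [Subtype.ext h])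
      obtain ⟨w, hw, hne⟩ := hB₂.1 a.1 b.1 hab
      have hwv : w ≠ v₂ := fun h => hv₂B (h ▸ hw)
      refine ⟨Sum.inr ⟨w, hwv⟩, (hmem_inr _).mpr hw, ?_⟩
      rw [joinGraph_dist_inr_inr hdom₁ hdom₂, joinGraph_dist_inr_inr hdom₁ hdom₂]
      exact hne
  -- decomposition of any resolving set, and the lower bound
  have lower : ∀ W : Finset (V₁ ⊕ {y : V₂ // y ≠ v₂}), IsResolvingSet H W →
      k₁ + k₂ ≤ W.card ∧ (W.card = k₁ + k₂ → W = BH) := by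
    intro W hW
    set W₁ : Finset V₁ := Finset.univ.filter (fun a => Sum.inl a ∈ W) with hW₁
    set W₂s : Finset {y : V₂ // y ≠ v₂} :=
      Finset.univ.filter (fun c => Sum.inr c ∈ W) with hW₂s
    set W₂ : Finset V₂ := W₂s.map (Function.Embedding.subtype _) with hW₂
    have hmemW₁ : ∀ a : V₁, a ∈ W₁ ↔ Sum.inl a ∈ W := by
      intro a; simp [hW₁]
    have hmemW₂s : ∀ c, c ∈ W₂s ↔ Sum.inr c ∈ W := by
      intro c; simp [hW₂s]
    have hmemW₂ : ∀ c : {y : V₂ // y ≠ v₂}, c.1 ∈ W₂ ↔ Sum.inr c ∈ W := by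
      intro c
      rw [hW₂, Finset.mem_map]
      constructor
      · rintro ⟨d, hd, hdc⟩
        have : d = c := Subtype.ext hdc
        rw [← this]
        exact (hmemW₂s d).mp hd
      · intro h
        exact ⟨c, (hmemW₂s c).mpr h, rfl⟩
    have hW₂card : W₂.card = W₂s.card := Finset.card_map _
    have hsplit : W.card = W₁.card + W₂s.card := by
      have hWeq : W = W₁.map emb1 ∪ W₂s.map emb2 := by
        ext x
        rcases x with a | c
        · simp only [Finset.mem_union, Finset.mem_map, hemb1, hemb2,
            Function.Embedding.coeFn_mk]
          constructor
          · intro h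
            exact Or.inl ⟨a, (hmemW₁ a).mpr h, rfl⟩
          · rintro (⟨d, hd, hdc⟩ | ⟨d, hd, hdc⟩)
            · cases hdc; exact (hmemW₁ a).mp hd
            · exact absurd hdc (by simp)
        · simp only [Finset.mem_union, Finset.mem_map, hemb1, hemb2,
            Function.Embedding.coeFn_mk]
          constructor
          · intro h
            exact Or.inr ⟨c, (hmemW₂s c).mpr h, rfl⟩
          · rintro (⟨d, hd, hdc⟩ | ⟨d, hd, hdc⟩)
            · exact absurd hdc (by simp)
            · cases hdc; exact (hmemW₂s c).mp hd
      rw [hWeq, Finset.card_union_of_disjoint, Finset.card_map, Finset.card_map]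
      rw [Finset.disjoint_left]
      rintro x hx hx'
      rw [Finset.mem_map] at hx hx'
      obtain ⟨a, _, ha⟩ := hx
      obtain ⟨b, _, hb⟩ := hx'
      rw [← ha] at hb
      simp [hemb1, hemb2] at hb
    have hres₁ : IsResolvingSet G₁ W₁ := by
      intro a b hab
      obtain ⟨w, hw, hne⟩ := hW (Sum.inl a) (Sum.inl b) (fun h => hab (by injection h))
      rcases w with c | c
      · refine ⟨c, (hmemW₁ c).mpr hw, ?_⟩
        rw [joinGraph_dist_inl_inl hdom₁, joinGraph_dist_inl_inl hdom₁] at hne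
        exact hne
      · exfalso
        rw [joinGraph_dist_inl_inr hdom₁, joinGraph_dist_inl_inr hdom₁] at hne
        exact hne rfl
    -- pairs in V₂ not involving v₂ are resolved by W₂
    have hres₂pairs : ∀ x y : V₂, x ≠ v₂ → y ≠ v₂ → x ≠ y →
        ∃ w ∈ W₂, G₂.dist x w ≠ G₂.dist y w := by
      intro x y hx hy hxy
      obtain ⟨w, hw, hne⟩ := hW (Sum.inr ⟨x, hx⟩) (Sum.inr ⟨y, hy⟩)
        (fun h => hxy (by injection h with h'; exact congrArg Subtype.val h'))
      rcases w with c | c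
      · exfalso
        rw [joinGraph_dist_inr_inl hdom₁, joinGraph_dist_inr_inl hdom₁] at hne
        exact hne rfl
      · refine ⟨c.1, (hmemW₂ c).mpr hw, ?_⟩
        rw [joinGraph_dist_inr_inr hdom₁ hdom₂, joinGraph_dist_inr_inr hdom₁ hdom₂] at hne
        exact hne
    by_cases hvW : Sum.inl v₁ ∈ W
    · -- v₁ ∈ W : strict inequality
      have hres₂' : IsResolvingSet G₂ (insert v₂ W₂) := by
        intro x y hxy
        rcases eq_or_ne x v₂ with hx | hx
        · refine ⟨v₂, Finset.mem_insert_self _ _, ?_⟩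
          rw [hx, SimpleGraph.dist_self,
            hdom₂.dist_dom (show y ≠ v₂ from fun h => hxy (hx.trans h.symm))]
          omega
        · rcases eq_or_ne y v₂ with hy | hy
          · refine ⟨v₂, Finset.mem_insert_self _ _, ?_⟩
            rw [hy, SimpleGraph.dist_self]
            rw [hdom₂.dist_dom hx]
            omega
          · obtain ⟨w, hw, hne⟩ := hres₂pairs x y hx hy hxy
            exact ⟨w, Finset.mem_insert_of_mem hw, hne⟩
      have hcard₂ : k₂ + 1 ≤ (insert v₂ W₂).card :=
        dom_mem_resolving_card hdom₂ hu₂' hres₂' (Finset.mem_insert_self _ _)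
      have hins : (insert v₂ W₂).card ≤ W₂.card + 1 := Finset.card_insert_le _ _
      have hv₁W₁ : v₁ ∈ W₁ := (hmemW₁ v₁).mpr hvW
      have hcard₁ : k₁ + 1 ≤ W₁.card :=
        dom_mem_resolving_card hdom₁ hu₁' hres₁ hv₁W₁
      constructor
      · omega
      · intro h; omega
    · -- v₁ ∉ W
      have hres₂ : IsResolvingSet G₂ W₂ := by
        have hGv : ∀ x : V₂, x ≠ v₂ → ∃ w ∈ W₂, G₂.dist x w ≠ G₂.dist v₂ w := by
          intro x hx
          obtain ⟨w, hw, hne⟩ := hW (Sum.inr ⟨x, hx⟩) (Sum.inl v₁) (by simp)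
          rcases w with c | c
          · exfalso
            rcases eq_or_ne c v₁ with hc | hc
            · exact hvW (hc ▸ hw)
            · rw [joinGraph_dist_inr_inl hdom₁, joinGraph_dist_inl_inl hdom₁,
                hd1 hc] at hne
              exact hne rfl
          · refine ⟨c.1, (hmemW₂ c).mpr hw, ?_⟩
            rw [joinGraph_dist_inr_inr hdom₁ hdom₂,
              joinGraph_dist_inl_inr hdom₁] at hne
            rw [hd2 c.2]
            exact hne
        intro x y hxy
        rcases eq_or_ne x v₂ with hx | hx
        · obtain ⟨w, hw, hne⟩ := hGv y (fun h => hxy (hx.trans h.symm))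
          refine ⟨w, hw, fun h => hne ?_⟩
          rw [← h, hx]
        · rcases eq_or_ne y v₂ with hy | hy
          · obtain ⟨w, hw, hne⟩ := hGv x hx
            exact ⟨w, hw, fun h => hne (by rw [h, hy])⟩
          · exact hres₂pairs x y hx hy hxy
      have hcard₁ : k₁ ≤ W₁.card := metricDim_le_card hres₁
      have hcard₂ : k₂ ≤ W₂.card := metricDim_le_card hres₂
      constructor
      · omega
      · intro heq
        have hc₁ : W₁.card = k₁ := by omega
        have hc₂ : W₂.card = k₂ := by omega
        have hW₁B : W₁ = B₁ := hun₁ W₁ ⟨hres₁, hc₁⟩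
        have hW₂B : W₂ = B₂ := hun₂ W₂ ⟨hres₂, hc₂⟩
        ext x
        rcases x with a | c
        · rw [← hmemW₁ a, hmem_inl a, hW₁B]
        · rw [← hmemW₂ c, hmem_inr c, hW₂B]
  -- conclude
  have hdim : metricDim H = k₁ + k₂ := by
    have h1 : metricDim H ≤ k₁ + k₂ := hBHcard ▸ metricDim_le_card hBHres
    obtain ⟨BH', hBH'⟩ := exists_metricBasis hH
    have h2 := (lower BH' hBH'.1).1
    rw [hBH'.2] at h2
    omega
  refine ⟨⟨BH, ⟨hBHres, by rw [hBHcard, hdim]⟩, ?_⟩, hdim⟩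
  intro S hS
  exact (lower S hS.1).2 (by rw [hS.2, hdim])

end main
section degree

open scoped Classical

variable {V : Type*} [Fintype V]

lemma compl_singleton_ncard (v : V) : ({v}ᶜ : Set V).ncard = Fintype.card V - 1 := by
  rw [← Nat.card_coe_set_eq, Nat.card_eq_fintype_card]
  rw [Fintype.card_congr (Equiv.subtypeEquivRight (q := fun u => ¬ u = v)
    (fun u => by simp))]
  rw [Fintype.card_subtype_compl, Fintype.card_subtype_eq]

lemma dom_of_ncard {G : SimpleGraph V} {v : V}
    (h : Nat.card (G.neighborSet v) = Fintype.card V - 1) : Dom G v := by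
  have hsub : G.neighborSet v ⊆ ({v}ᶜ : Set V) := by
    intro u hu
    simp only [Set.mem_compl_iff, Set.mem_singleton_iff]
    exact fun he => G.irrefl (v := v) (he ▸ hu)
  have heq : G.neighborSet v = ({v}ᶜ : Set V) := by
    apply Set.eq_of_subset_of_ncard_le hsub
    rw [compl_singleton_ncard, ← Nat.card_coe_set_eq, h]
  intro u hu
  have : u ∈ G.neighborSet v := by
    rw [heq]
    simp [hu]
  exact this

lemma dom_ncard {G : SimpleGraph V} {v : V} (hv : Dom G v) :
    Nat.card (G.neighborSet v) = Fintype.card V - 1 := by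
  have heq : G.neighborSet v = ({v}ᶜ : Set V) := by
    ext u
    simp only [SimpleGraph.mem_neighborSet, Set.mem_compl_iff, Set.mem_singleton_iff]
    constructor
    · intro h he
      exact G.irrefl (v := v) (he ▸ h)
    · intro h
      exact hv u h
  rw [heq, Nat.card_coe_set_eq, compl_singleton_ncard]

end degree

section transport

open scoped Classical

variable {A B : Type*} [Fintype A] [Fintype B]

lemma map_equiv_inv (e : A ≃ B) (S : Finset A) :
    (S.map e.toEmbedding).map e.symm.toEmbedding = S := by
  ext x
  simp [Finset.mem_map]

lemma map_equiv_inv' (e : A ≃ B) (T : Finset B) :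
    (T.map e.symm.toEmbedding).map e.toEmbedding = T := by
  ext x
  simp [Finset.mem_map]

theorem comap_transfer (e : A ≃ B) (H : SimpleGraph B) {v : B} (hd : Dom H v) :
    Dom (H.comap ⇑e) (e.symm v) ∧ metricDim (H.comap ⇑e) = metricDim H ∧
      (UniquelyDimensional H → UniquelyDimensional (H.comap ⇑e)) := by
  set G := H.comap ⇑e with hG
  have hdG : Dom G (e.symm v) := by
    intro u hu
    show H.Adj (e (e.symm v)) (e u)
    rw [Equiv.apply_symm_apply]
    apply hd
    intro h
    exact hu (by rw [← h, Equiv.symm_apply_apply])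
  have hdist : ∀ x y : A, G.dist x y = H.dist (e x) (e y) := by
    intro x y
    rw [hdG.dist_eq, hd.dist_eq]
    simp only [Equiv.apply_eq_iff_eq]
    rfl
  have hresiff : ∀ S : Finset A,
      IsResolvingSet G S ↔ IsResolvingSet H (S.map e.toEmbedding) := by
    intro S
    constructor
    · intro h u u' huv
      obtain ⟨w, hw, hne⟩ := h (e.symm u) (e.symm u')
        (fun hh => huv (by rw [← Equiv.apply_symm_apply e u, hh, Equiv.apply_symm_apply]))
      refine ⟨e w, Finset.mem_map.mpr ⟨w, hw, rfl⟩, ?_⟩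
      have h1 := hdist (e.symm u) w
      have h2 := hdist (e.symm u') w
      rw [Equiv.apply_symm_apply] at h1 h2
      rw [← h1, ← h2]
      exact hne
    · intro h x y hxy
      obtain ⟨w', hw', hne⟩ := h (e x) (e y) (fun hh => hxy (e.injective hh))
      obtain ⟨w, hw, rfl⟩ := Finset.mem_map.mp hw'
      refine ⟨w, hw, ?_⟩
      rw [hdist x w, hdist y w]
      exact hne
  have hdim : metricDim G = metricDim H := by
    unfold metricDim
    congr 1
    ext k
    constructor
    · rintro ⟨S, h, c⟩
      exact ⟨S.map e.toEmbedding, (hresiff S).mp h, by rw [Finset.card_map]; exact c⟩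
    · rintro ⟨T, h, c⟩
      refine ⟨T.map e.symm.toEmbedding, (hresiff _).mpr ?_, by rw [Finset.card_map]; exact c⟩
      rw [map_equiv_inv']
      exact h
  have hbasis : ∀ S : Finset A,
      IsMetricBasis G S ↔ IsMetricBasis H (S.map e.toEmbedding) := by
    intro S
    constructor
    · rintro ⟨h1, h2⟩
      exact ⟨(hresiff S).mp h1, by rw [Finset.card_map, h2, hdim]⟩
    · rintro ⟨h1, h2⟩
      refine ⟨(hresiff S).mpr h1, ?_⟩
      rw [Finset.card_map] at h2
      rw [h2, hdim]
  refine ⟨hdG, hdim, ?_⟩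
  rintro ⟨BH, hBH, hun⟩
  refine ⟨BH.map e.symm.toEmbedding, (hbasis _).mpr ?_, ?_⟩
  · rw [map_equiv_inv']
    exact hBH
  · intro S hS
    have h1 : S.map e.toEmbedding = BH := hun _ ((hbasis S).mp hS)
    rw [← h1, map_equiv_inv]

end transport
theorem stmt14 {V₁ V₂ : Type*} [Fintype V₁] [Fintype V₂]
    (G₁ : SimpleGraph V₁) (G₂ : SimpleGraph V₂)
    (h₁ : G₁.Connected) (h₂ : G₂.Connected) (k₁ k₂ n₁ n₂ : ℕ)
    (hc₁ : Fintype.card V₁ = n₁) (hc₂ : Fintype.card V₂ = n₂)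
    (hu₁ : UniquelyKDimensional G₁ k₁) (hu₂ : UniquelyKDimensional G₂ k₂)
    (hd₁ : ∃ v, Nat.card (G₁.neighborSet v) = n₁ - 1)
    (hd₂ : ∃ v, Nat.card (G₂.neighborSet v) = n₂ - 1) :
    ∃ G : SimpleGraph (Fin (n₁ + n₂ - 1)), G.Connected ∧
      UniquelyKDimensional G (k₁ + k₂) ∧
      ∃ v, Nat.card (G.neighborSet v) = n₁ + n₂ - 2 := by
  classical
  obtain ⟨v₁, hv₁⟩ := hd₁
  obtain ⟨v₂, hv₂⟩ := hd₂
  have hdom₁ : Dom G₁ v₁ := dom_of_ncard (by rw [hc₁]; exact hv₁)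
  have hdom₂ : Dom G₂ v₂ := dom_of_ncard (by rw [hc₂]; exact hv₂)
  have hn₁ : 1 ≤ n₁ := by
    have : Nonempty V₁ := h₁.nonempty
    rw [← hc₁]
    exact Fintype.card_pos
  have hn₂ : 1 ≤ n₂ := by
    have : Nonempty V₂ := h₂.nonempty
    rw [← hc₂]
    exact Fintype.card_pos
  have hsubcard : Fintype.card {y : V₂ // y ≠ v₂} = n₂ - 1 := by
    rw [Fintype.card_subtype_compl, Fintype.card_subtype_eq, hc₂]
  have hcard : Fintype.card (V₁ ⊕ {y : V₂ // y ≠ v₂}) = n₁ + n₂ - 1 := by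
    rw [Fintype.card_sum, hc₁, hsubcard]
    omega
  have hmain := joinGraph_main hdom₁ hdom₂ hu₁.1 hu₂.1
  have hH : Dom (JoinGraph G₁ G₂ v₂) (Sum.inl v₁) := joinGraph_dom hdom₁
  set e : Fin (n₁ + n₂ - 1) ≃ (V₁ ⊕ {y : V₂ // y ≠ v₂}) :=
    (Fintype.equivFinOfCardEq hcard).symm with he
  obtain ⟨hdG, hdim, huniqG⟩ := comap_transfer e (JoinGraph G₁ G₂ v₂) hH
  refine ⟨(JoinGraph G₁ G₂ v₂).comap ⇑e, hdG.connected, ⟨huniqG hmain.1, ?_⟩,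
    ⟨e.symm (Sum.inl v₁), ?_⟩⟩
  · rw [hdim, hmain.2, hu₁.2, hu₂.2]
  · rw [dom_ncard hdG, Fintype.card_fin]
    omega
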